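/- Let B, C be countable partitions with Σ_{B,C} |ρ(B,C)| ≤ β, K_4(B), K_4(C) < ∞, and L^c = {(B,C): μ(B∩C) < 2μ(B)μ(C)}. Then |Σ_{(B,C)∈L^c} ρ(B,C) J_B(B) J_C(C)| ≤ β^{1/2} σ(B) σ(C), where σ(B)² = Σ μ(B)J_B(B)² and ρ(B,C) = μ(B∩C) − μ(B)μ(C). -/

import Mathlib

open MeasureTheory
open scoped Classical

def IsCountablePartition {Ω : Type*} [MeasurableSpace Ω] (μ : Measure Ω)
    (B : ℕ → Set Ω) : Prop :=
  (∀ i, MeasurableSet (B i)) ∧ Pairwise (Function.onFun Disjoint B) ∧ μ (⋃ i, B i) = μ Set.univ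

noncomputable section

variable {Ω : Type*} [MeasurableSpace Ω]

/-- Entropy `H(B)`. -/
def entropy (μ : Measure Ω) (B : ℕ → Set Ω) : ℝ :=
  ∑' i, -((μ (B i)).toReal * Real.log (μ (B i)).toReal)

/-- Centered information function `J_B(B) = −log μ(B) − H(B)` on the atom `B i`. -/
def Jinfo (μ : Measure Ω) (B : ℕ → Set Ω) (i : ℕ) : ℝ :=
  -Real.log (μ (B i)).toReal - entropy μ B

/-- `ρ(B,C) = μ(B∩C) − μ(B)μ(C)`. -/
def rho (μ : Measure Ω) (B C : Set Ω) : ℝ :=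
  (μ (B ∩ C)).toReal - (μ B).toReal * (μ C).toReal

/-- Standard deviation `σ(B)` of the centered information function. -/
def sigmaInfo (μ : Measure Ω) (B : ℕ → Set Ω) : ℝ :=
  Real.sqrt (∑' i, (μ (B i)).toReal * (Jinfo μ B i) ^ 2)

/-- Cauchy–Schwarz for `tsum`. -/
lemma tsum_mul_le_sqrt_mul_sqrt' {ι : Type*} (a b : ι → ℝ)
    (ha2 : Summable fun p => a p ^ 2) (hb2 : Summable fun p => b p ^ 2)
    (hab : Summable fun p => a p * b p) :
    ∑' p, a p * b p ≤ Real.sqrt (∑' p, a p ^ 2) * Real.sqrt (∑' p, b p ^ 2) := by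
  refine Summable.tsum_le_of_sum_le hab fun s => ?_
  calc ∑ p ∈ s, a p * b p
      ≤ Real.sqrt (∑ p ∈ s, a p ^ 2) * Real.sqrt (∑ p ∈ s, b p ^ 2) :=
        Real.sum_mul_le_sqrt_mul_sqrt s a b
    _ ≤ Real.sqrt (∑' p, a p ^ 2) * Real.sqrt (∑' p, b p ^ 2) := by
        exact mul_le_mul (Real.sqrt_le_sqrt (Summable.sum_le_tsum s (fun i _ => sq_nonneg _) ha2))
          (Real.sqrt_le_sqrt (Summable.sum_le_tsum s (fun i _ => sq_nonneg _) hb2))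
          (Real.sqrt_nonneg _) (Real.sqrt_nonneg _)

/-- Summability of the variance terms from the fourth-moment assumption. -/
lemma var_summable (μ : Measure Ω) [IsProbabilityMeasure μ] (B : ℕ → Set Ω)
    (hB : IsCountablePartition μ B)
    (hK4 : Summable fun i => (μ (B i)).toReal * (Real.log (μ (B i)).toReal) ^ 4) :
    Summable fun i => (μ (B i)).toReal * (Jinfo μ B i) ^ 2 := by
  have hμ : Summable fun i => (μ (B i)).toReal := by
    apply ENNReal.summable_toReal
    rw [← measure_iUnion hB.2.1 hB.1, hB.2.2]
    simp
  have hlog2 : Summable fun i => (μ (B i)).toReal * (Real.log (μ (B i)).toReal) ^ 2 := by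
    refine Summable.of_nonneg_of_le (fun i => by positivity) (fun i => ?_) (hμ.add hK4)
    have h0 : (0:ℝ) ≤ (μ (B i)).toReal := ENNReal.toReal_nonneg
    set l := Real.log (μ (B i)).toReal
    nlinarith [mul_nonneg h0 (sq_nonneg (l ^ 2 - 1))]
  refine Summable.of_nonneg_of_le (fun i => by positivity) (fun i => ?_)
    ((hlog2.mul_left 2).add (hμ.mul_left (2 * (entropy μ B) ^ 2)))
  have h0 : (0:ℝ) ≤ (μ (B i)).toReal := ENNReal.toReal_nonneg
  simp only [Jinfo]
  set l := Real.log (μ (B i)).toReal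
  set H := entropy μ B
  nlinarith [mul_nonneg h0 (sq_nonneg (l - H))]

theorem Rminus_bound (μ : Measure Ω) [IsProbabilityMeasure μ]
    (B C : ℕ → Set Ω) (β : ℝ)
    (hB : IsCountablePartition μ B) (hC : IsCountablePartition μ C)
    (hρsum : Summable fun p : ℕ × ℕ => |rho μ (B p.1) (C p.2)|)
    (hρβ : (∑' p : ℕ × ℕ, |rho μ (B p.1) (C p.2)|) ≤ β)
    (hK4B : Summable fun i => (μ (B i)).toReal * (Real.log (μ (B i)).toReal) ^ 4)
    (hK4C : Summable fun j => (μ (C j)).toReal * (Real.log (μ (C j)).toReal) ^ 4) :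
    |∑' p : ℕ × ℕ,
        (if (μ (B p.1 ∩ C p.2)).toReal < 2 * (μ (B p.1)).toReal * (μ (C p.2)).toReal
          then rho μ (B p.1) (C p.2) * Jinfo μ B p.1 * Jinfo μ C p.2 else 0)|
      ≤ β ^ ((1 : ℝ) / 2) * sigmaInfo μ B * sigmaInfo μ C := by
  set f : ℕ × ℕ → ℝ := fun p =>
    if (μ (B p.1 ∩ C p.2)).toReal < 2 * (μ (B p.1)).toReal * (μ (C p.2)).toReal
      then rho μ (B p.1) (C p.2) * Jinfo μ B p.1 * Jinfo μ C p.2 else 0 with hf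
  set c : ℕ → ℝ := fun i => (μ (B i)).toReal * (Jinfo μ B i) ^ 2 with hcdef
  set d : ℕ → ℝ := fun j => (μ (C j)).toReal * (Jinfo μ C j) ^ 2 with hddef
  set a : ℕ × ℕ → ℝ := fun p => Real.sqrt |rho μ (B p.1) (C p.2)| with hadef
  set b : ℕ × ℕ → ℝ := fun p => Real.sqrt (c p.1) * Real.sqrt (d p.2) with hbdef
  have hcnn : ∀ i, 0 ≤ c i := fun i => by positivity
  have hdnn : ∀ j, 0 ≤ d j := fun j => by positivity
  have hc : Summable c := var_summable μ B hB hK4B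
  have hd : Summable d := var_summable μ C hC hK4C
  have ha2 : ∀ p, a p ^ 2 = |rho μ (B p.1) (C p.2)| := fun p =>
    Real.sq_sqrt (abs_nonneg _)
  have hb2 : ∀ p : ℕ × ℕ, b p ^ 2 = c p.1 * d p.2 := by
    intro p
    rw [hbdef, mul_pow, Real.sq_sqrt (hcnn _), Real.sq_sqrt (hdnn _)]
  have ha2s : Summable fun p => a p ^ 2 := by simpa only [ha2] using hρsum
  have hb2s : Summable fun p : ℕ × ℕ => b p ^ 2 := by
    simp only [hb2]
    exact hc.mul_of_nonneg hd hcnn hdnn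
  have hab : Summable fun p => a p * b p := by
    refine Summable.of_nonneg_of_le
      (fun p => mul_nonneg (Real.sqrt_nonneg _) (mul_nonneg (Real.sqrt_nonneg _) (Real.sqrt_nonneg _)))
      (fun p => ?_) ((ha2s.add hb2s).div_const 2)
    nlinarith [sq_nonneg (a p - b p)]
  -- pointwise bound
  have hfab : ∀ p, |f p| ≤ a p * b p := by
    intro p
    rcases p with ⟨i, j⟩
    by_cases h : (μ (B i ∩ C j)).toReal < 2 * (μ (B i)).toReal * (μ (C j)).toReal
    · simp only [hf, if_pos h]
      have hBnn : (0:ℝ) ≤ (μ (B i)).toReal := ENNReal.toReal_nonneg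
      have hCnn : (0:ℝ) ≤ (μ (C j)).toReal := ENNReal.toReal_nonneg
      have hIn : (0:ℝ) ≤ (μ (B i ∩ C j)).toReal := ENNReal.toReal_nonneg
      have hρle : |rho μ (B i) (C j)| ≤ (μ (B i)).toReal * (μ (C j)).toReal := by
        rw [abs_le, rho]; constructor <;> nlinarith
      have hsb : Real.sqrt (c i) = Real.sqrt (μ (B i)).toReal * |Jinfo μ B i| := by
        rw [hcdef, Real.sqrt_mul hBnn, Real.sqrt_sq_eq_abs]
      have hsd : Real.sqrt (d j) = Real.sqrt (μ (C j)).toReal * |Jinfo μ C j| := by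
        rw [hddef, Real.sqrt_mul hCnn, Real.sqrt_sq_eq_abs]
      have key : Real.sqrt |rho μ (B i) (C j)| ≤
          Real.sqrt (μ (B i)).toReal * Real.sqrt (μ (C j)).toReal := by
        rw [← Real.sqrt_mul hBnn]
        exact Real.sqrt_le_sqrt hρle
      have habs : |rho μ (B i) (C j)| =
          Real.sqrt |rho μ (B i) (C j)| * Real.sqrt |rho μ (B i) (C j)| := by
        rw [Real.mul_self_sqrt (abs_nonneg _)]
      calc |rho μ (B i) (C j) * Jinfo μ B i * Jinfo μ C j|
          = |rho μ (B i) (C j)| * (|Jinfo μ B i| * |Jinfo μ C j|) := by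
            rw [abs_mul, abs_mul]; ring
        _ ≤ (Real.sqrt |rho μ (B i) (C j)| *
              (Real.sqrt (μ (B i)).toReal * Real.sqrt (μ (C j)).toReal)) *
              (|Jinfo μ B i| * |Jinfo μ C j|) := by
            refine mul_le_mul_of_nonneg_right ?_ (by positivity)
            calc |rho μ (B i) (C j)|
                = Real.sqrt |rho μ (B i) (C j)| * Real.sqrt |rho μ (B i) (C j)| := habs
              _ ≤ Real.sqrt |rho μ (B i) (C j)| *
                  (Real.sqrt (μ (B i)).toReal * Real.sqrt (μ (C j)).toReal) :=
                mul_le_mul_of_nonneg_left key (Real.sqrt_nonneg _)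
        _ = a (i, j) * b (i, j) := by
            rw [hadef, hbdef]; simp only []
            rw [hsb, hsd]; ring
    · simp only [hf, if_neg h, abs_zero]
      exact mul_nonneg (Real.sqrt_nonneg _)
        (mul_nonneg (Real.sqrt_nonneg _) (Real.sqrt_nonneg _))
  have hfabs : Summable fun p => |f p| :=
    Summable.of_nonneg_of_le (fun p => abs_nonneg _) hfab hab
  have h1 : |∑' p, f p| ≤ ∑' p, |f p| := by
    simpa using norm_tsum_le_tsum_norm (f := f) (by simpa using hfabs)
  have h2 : (∑' p, |f p|) ≤ ∑' p, a p * b p := Summable.tsum_le_tsum hfab hfabs hab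
  have h3 := tsum_mul_le_sqrt_mul_sqrt' a b ha2s hb2s hab
  have h4 : Real.sqrt (∑' p, a p ^ 2) ≤ Real.sqrt β := by
    apply Real.sqrt_le_sqrt
    calc (∑' p, a p ^ 2) = ∑' p : ℕ × ℕ, |rho μ (B p.1) (C p.2)| := by
          simp only [ha2]
      _ ≤ β := hρβ
  have h5 : Real.sqrt (∑' p, b p ^ 2) = sigmaInfo μ B * sigmaInfo μ C := by
    have hprod : (∑' p : ℕ × ℕ, b p ^ 2) = (∑' i, c i) * (∑' j, d j) := by
      simp only [hb2]
      exact (Summable.tsum_mul_tsum hc hd (hc.mul_of_nonneg hd hcnn hdnn)).symm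
    rw [hprod, Real.sqrt_mul (tsum_nonneg hcnn)]
    rfl
  have hβ2 : β ^ ((1:ℝ)/2) = Real.sqrt β := (Real.sqrt_eq_rpow β).symm
  calc |∑' p, f p| ≤ ∑' p, a p * b p := h1.trans h2
    _ ≤ Real.sqrt (∑' p, a p ^ 2) * Real.sqrt (∑' p, b p ^ 2) := h3
    _ ≤ Real.sqrt β * (sigmaInfo μ B * sigmaInfo μ C) := by
        rw [h5]
        exact mul_le_mul_of_nonneg_right h4
          (mul_nonneg (Real.sqrt_nonneg _) (Real.sqrt_nonneg _))
    _ = β ^ ((1:ℝ)/2) * sigmaInfo μ B * sigmaInfo μ C := by rw [hβ2]; ring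

end
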